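/- With the hypotheses of the previous shifting identity and λ + 2μ ≠ 0, define W_mixt(S,T) := W_mp3(S,T) − (λ²/(2(λ+2μ)))(tr S)(tr T). Then for every β ∈ ℝ: W_mp3(S − (λ/(λ+2μ))(tr S) n⊗n, T + β n⊗n) = W_mixt(S,T). -/

import Mathlib

open Matrix

/-- Frobenius inner product on 3×3 real matrices. -/
noncomputable def finner (A B : Matrix (Fin 3) (Fin 3) ℝ) : ℝ := Matrix.trace (Aᵀ * B)

noncomputable def symPart (X : Matrix (Fin 3) (Fin 3) ℝ) : Matrix (Fin 3) (Fin 3) ℝ :=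
  (1/2 : ℝ) • (X + Xᵀ)

noncomputable def skewPart (X : Matrix (Fin 3) (Fin 3) ℝ) : Matrix (Fin 3) (Fin 3) ℝ :=
  (1/2 : ℝ) • (X - Xᵀ)

/-- `W_mp3(S,T) = μ⟨sym S, sym T⟩ + μ_c⟨skew S, skew T⟩ + (λ/2)(tr S)(tr T)`. -/
noncomputable def Wmp3 (lam mu muc : ℝ) (S T : Matrix (Fin 3) (Fin 3) ℝ) : ℝ :=
  mu * finner (symPart S) (symPart T) + muc * finner (skewPart S) (skewPart T)
    + lam/2 * (Matrix.trace S * Matrix.trace T)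

/-- `W_mixt(S,T) := W_mp3(S,T) − (λ²/(2(λ+2μ)))(tr S)(tr T)`. -/
noncomputable def Wmixt (lam mu muc : ℝ) (S T : Matrix (Fin 3) (Fin 3) ℝ) : ℝ :=
  Wmp3 lam mu muc S T - lam^2 / (2*(lam + 2*mu)) * (Matrix.trace S * Matrix.trace T)

lemma finner_comm (A B : Matrix (Fin 3) (Fin 3) ℝ) : finner A B = finner B A := by
  rw [finner, finner, ← Matrix.trace_transpose, Matrix.transpose_mul, Matrix.transpose_transpose,
    Matrix.trace_mul_comm]

lemma finner_add_right (A B C : Matrix (Fin 3) (Fin 3) ℝ) :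
    finner A (B + C) = finner A B + finner A C := by
  simp [finner, Matrix.mul_add]

lemma finner_sub_left (A B C : Matrix (Fin 3) (Fin 3) ℝ) :
    finner (A - B) C = finner A C - finner B C := by
  simp [finner, Matrix.sub_mul]

lemma finner_smul_right (c : ℝ) (A B : Matrix (Fin 3) (Fin 3) ℝ) :
    finner A (c • B) = c * finner A B := by
  simp [finner, Matrix.mul_smul]

lemma finner_smul_left (c : ℝ) (A B : Matrix (Fin 3) (Fin 3) ℝ) :
    finner (c • A) B = c * finner A B := by
  simp [finner, Matrix.smul_mul]

lemma nnT (n : Fin 3 → ℝ) : (vecMulVec n n)ᵀ = vecMulVec n n := by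
  ext i j; simp [vecMulVec_apply, mul_comm]

lemma nn_trace (n : Fin 3 → ℝ) : Matrix.trace (vecMulVec n n) = n ⬝ᵥ n := by
  simp [Matrix.trace, Matrix.diag, vecMulVec_apply, dotProduct]

lemma nn_mul_nn (n : Fin 3 → ℝ) :
    vecMulVec n n * vecMulVec n n = (n ⬝ᵥ n) • vecMulVec n n := by
  ext i j
  simp only [Matrix.mul_apply, vecMulVec_apply, Matrix.smul_apply, dotProduct, smul_eq_mul,
    Finset.sum_mul]
  exact Finset.sum_congr rfl fun x _ => by ring

lemma finner_nn_nn (n : Fin 3 → ℝ) (hn : n ⬝ᵥ n = 1) :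
    finner (vecMulVec n n) (vecMulVec n n) = 1 := by
  rw [finner, nnT, nn_mul_nn, Matrix.trace_smul, nn_trace, hn]
  simp

lemma symPart_add_smul_nn (X : Matrix (Fin 3) (Fin 3) ℝ) (c : ℝ) (n : Fin 3 → ℝ) :
    symPart (X + c • vecMulVec n n) = symPart X + c • vecMulVec n n := by
  unfold symPart
  rw [Matrix.transpose_add, Matrix.transpose_smul, nnT]
  ext i j
  simp [Matrix.add_apply, Matrix.smul_apply]
  ring

lemma symPart_sub_smul_nn (X : Matrix (Fin 3) (Fin 3) ℝ) (c : ℝ) (n : Fin 3 → ℝ) :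
    symPart (X - c • vecMulVec n n) = symPart X - c • vecMulVec n n := by
  unfold symPart
  rw [Matrix.transpose_sub, Matrix.transpose_smul, nnT]
  ext i j
  simp [Matrix.add_apply, Matrix.sub_apply, Matrix.smul_apply]
  ring

lemma skewPart_add_smul_nn (X : Matrix (Fin 3) (Fin 3) ℝ) (c : ℝ) (n : Fin 3 → ℝ) :
    skewPart (X + c • vecMulVec n n) = skewPart X := by
  unfold skewPart
  rw [Matrix.transpose_add, Matrix.transpose_smul, nnT]
  ext i j
  simp [Matrix.add_apply, Matrix.sub_apply, Matrix.smul_apply]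

lemma skewPart_sub_smul_nn (X : Matrix (Fin 3) (Fin 3) ℝ) (c : ℝ) (n : Fin 3 → ℝ) :
    skewPart (X - c • vecMulVec n n) = skewPart X := by
  unfold skewPart
  rw [Matrix.transpose_sub, Matrix.transpose_smul, nnT]
  ext i j
  simp [Matrix.sub_apply, Matrix.smul_apply]

/-- For a unit vector `n`, matrices `S, T` with `⟨sym S, n⊗n⟩ = ⟨sym T, n⊗n⟩ = 0`, and
`λ + 2μ ≠ 0`, for every `β`:
`W_mp3(S − (λ/(λ+2μ))(tr S) n⊗n, T + β n⊗n) = W_mixt(S,T)`. -/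
theorem stmt_10 (lam mu muc : ℝ) (hlm : lam + 2*mu ≠ 0)
    (n : Fin 3 → ℝ) (hn : n ⬝ᵥ n = 1)
    (S T : Matrix (Fin 3) (Fin 3) ℝ)
    (hS : finner (symPart S) (vecMulVec n n) = 0)
    (hT : finner (symPart T) (vecMulVec n n) = 0) :
    ∀ β : ℝ,
      Wmp3 lam mu muc (S - (lam/(lam + 2*mu) * Matrix.trace S) • vecMulVec n n)
          (T + β • vecMulVec n n)
        = Wmixt lam mu muc S T := by
  intro β
  have hPsym : finner (vecMulVec n n) (symPart T) = 0 := by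
    rw [finner_comm]; exact hT
  rw [Wmixt, Wmp3, Wmp3, symPart_sub_smul_nn, symPart_add_smul_nn, skewPart_sub_smul_nn,
    skewPart_add_smul_nn, Matrix.trace_sub, Matrix.trace_add, Matrix.trace_smul,
    Matrix.trace_smul, nn_trace, hn, finner_sub_left, finner_add_right, finner_add_right,
    finner_smul_left, finner_smul_right, finner_smul_right, finner_smul_left,
    hS, hPsym, finner_nn_nn n hn, smul_eq_mul]
  have hlm' : mu * 2 + lam ≠ 0 := by intro h; apply hlm; linarith
  field_simp
  have key : mu * β * lam * S.trace * (mu * 2 + lam)⁻¹ * 2 + β * lam ^ 2 * S.trace * (mu * 2 + lam)⁻¹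
      = β * lam * S.trace := by
    rw [show mu * β * lam * S.trace * (mu * 2 + lam)⁻¹ * 2 + β * lam ^ 2 * S.trace * (mu * 2 + lam)⁻¹
      = β * lam * S.trace * ((mu * 2 + lam) * (mu * 2 + lam)⁻¹) by ring, mul_inv_cancel₀ hlm', mul_one]
  linear_combination -key
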